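/- For a natural number n ≥ 2, define T_n = ∑ 1/((a − 1/2)·(b − 1/2)·sqrt(n − a − b + 1/4)), where the sum is over all pairs of integers a, b with a, b ≥ 1 and a + b ≤ n. Then T_n = O((log n)^2 / sqrt(n)) as n → ∞: there exist a constant C > 0 and N such that for all n ≥ N, T_n ≤ C·(log n)^2 / sqrt(n). -/

import Mathlib

/-- The triple sum
`T n = ∑_{a,b ≥ 1, a+b ≤ n} 1/((a − 1/2)(b − 1/2)√(n − a − b + 1/4))`. -/
noncomputable def Tsum (n : ℕ) : ℝ :=
  ∑ p ∈ (Finset.Icc 1 n ×ˢ Finset.Icc 1 n).filter (fun p : ℕ × ℕ => p.1 + p.2 ≤ n),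
    1 / (((p.1 : ℝ) - 1/2) * ((p.2 : ℝ) - 1/2) *
      Real.sqrt ((n : ℝ) - (p.1 : ℝ) - (p.2 : ℝ) + 1/4))

noncomputable def S1 (n : ℕ) : ℝ := ∑ a ∈ Finset.Icc 1 n, 1/((a:ℝ) - 1/2)
noncomputable def S2 (n : ℕ) : ℝ := ∑ c ∈ Finset.range (n+1), 1/Real.sqrt ((c:ℝ) + 1/4)

def sset (n : ℕ) : Finset (ℕ × ℕ) :=
  (Finset.Icc 1 n ×ˢ Finset.Icc 1 n).filter (fun p : ℕ × ℕ => p.1 + p.2 ≤ n)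

lemma log_step (x : ℝ) (hx : 0 < x) : 1/(x+1) ≤ Real.log (x+1) - Real.log x := by
  have h := Real.log_le_sub_one_of_pos (show 0 < x/(x+1) by positivity)
  rw [Real.log_div (ne_of_gt hx) (by positivity)] at h
  have h2 : x/(x+1) - 1 = -(1/(x+1)) := by field_simp; ring
  linarith [h2 ▸ h]

lemma S1_nonneg (n : ℕ) : 0 ≤ S1 n := by
  apply Finset.sum_nonneg
  intro a ha
  simp only [Finset.mem_Icc] at ha
  have h : (1:ℝ) ≤ a := by exact_mod_cast ha.1
  have : (0:ℝ) < (a:ℝ) - 1/2 := by linarith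
  positivity

lemma S2_nonneg (n : ℕ) : 0 ≤ S2 n := by
  apply Finset.sum_nonneg; intro c _; positivity

lemma S1_bound (n : ℕ) (hn : 1 ≤ n) : S1 n ≤ 3 + Real.log n := by
  have hrw : S1 n = ∑ i ∈ Finset.range n, 1/((i:ℝ) + 1/2) := by
    rw [S1, show Finset.Icc 1 n = Finset.Ico 1 (n+1) by rw [Finset.Ico_add_one_right_eq_Icc],
      Finset.sum_Ico_eq_sum_range]
    simp only [Nat.add_sub_cancel]
    apply Finset.sum_congr rfl
    intro i _
    push_cast
    ring_nf
  obtain ⟨m, rfl⟩ : ∃ m, n = m + 1 := ⟨n-1, by omega⟩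
  rw [hrw, Finset.sum_range_succ']
  have hstep : ∀ i ∈ Finset.range m, 1/(((i+1:ℕ):ℝ) + 1/2) ≤
      Real.log ((i+1:ℕ) + 1/2) - Real.log ((i:ℕ) + 1/2) := by
    intro i _
    have := log_step ((i:ℝ) + 1/2) (by positivity)
    push_cast
    convert this using 2 <;> ring_nf
  have hsum : ∑ i ∈ Finset.range m, 1/(((i+1:ℕ):ℝ) + 1/2) ≤
      Real.log ((m:ℕ) + 1/2) - Real.log ((0:ℕ) + 1/2) := by
    calc ∑ i ∈ Finset.range m, 1/(((i+1:ℕ):ℝ) + 1/2)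
        ≤ ∑ i ∈ Finset.range m, (Real.log ((i+1:ℕ) + 1/2) - Real.log ((i:ℕ) + 1/2)) :=
          Finset.sum_le_sum hstep
      _ = Real.log ((m:ℕ) + 1/2) - Real.log ((0:ℕ) + 1/2) :=
          Finset.sum_range_sub (fun i => Real.log ((i:ℕ) + 1/2)) m
  have hlog1 : Real.log ((m:ℝ) + 1/2) ≤ Real.log ((m:ℝ) + 1) := by
    apply Real.log_le_log (by positivity) (by linarith)
  have hlog2 : -Real.log (((0:ℕ):ℝ) + 1/2) = Real.log 2 := by
    norm_num
    rw [one_div, Real.log_inv]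
    ring
  have hlog2' : Real.log 2 ≤ 1 := by
    have := Real.log_le_sub_one_of_pos (show (0:ℝ) < 2 by norm_num)
    linarith
  push_cast at hsum ⊢
  have h0 : 1/((0:ℝ) + 1/2) = 2 := by norm_num
  push_cast at hlog1
  norm_num at hsum ⊢
  norm_num at hlog2
  linarith

lemma sqrt_step (c : ℕ) : 1/Real.sqrt ((c:ℝ)+1/4) ≤ 4*(Real.sqrt ((c:ℝ)+1) - Real.sqrt (c:ℝ)) := by
  set x : ℝ := (c:ℝ) with hxdef
  have hx : 0 ≤ x := Nat.cast_nonneg c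
  have h1 : Real.sqrt (x+1) ≤ 2*Real.sqrt (x+1/4) := by
    have : Real.sqrt (x+1) ≤ Real.sqrt (2^2*(x+1/4)) := Real.sqrt_le_sqrt (by linarith)
    rwa [Real.sqrt_mul (by norm_num), Real.sqrt_sq (by norm_num)] at this
  have h2 : Real.sqrt x * Real.sqrt (x+1) ≤ x + 1/2 := by
    rw [← Real.sqrt_mul hx]
    calc Real.sqrt (x*(x+1)) ≤ Real.sqrt ((x+1/2)^2) := Real.sqrt_le_sqrt (by nlinarith)
    _ = x + 1/2 := Real.sqrt_sq (by linarith)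
  have h3 : Real.sqrt (x+1) * Real.sqrt (x+1) = x+1 := Real.mul_self_sqrt (by linarith)
  have hp : 0 < Real.sqrt (x+1/4) := Real.sqrt_pos.2 (by linarith)
  have hmono : Real.sqrt x ≤ Real.sqrt (x+1) := Real.sqrt_le_sqrt (by linarith)
  rw [div_le_iff₀ hp]
  nlinarith [Real.sqrt_nonneg x, Real.sqrt_nonneg (x+1)]

lemma S2_bound (n : ℕ) : S2 n ≤ 4 * Real.sqrt ((n:ℝ)+1) := by
  have : S2 n ≤ ∑ c ∈ Finset.range (n+1),
      (4*Real.sqrt (((c+1:ℕ):ℝ)) - 4*Real.sqrt ((c:ℕ):ℝ)) := by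
    apply Finset.sum_le_sum
    intro c _
    have := sqrt_step c
    push_cast
    push_cast at this
    linarith
  rw [Finset.sum_range_sub (fun c => 4*Real.sqrt ((c:ℕ):ℝ)) (n+1)] at this
  simp at this
  push_cast at this ⊢
  linarith [Real.sqrt_nonneg ((n:ℝ)+1)]

lemma term_bound (x y z M : ℝ) (hx : 1/2 ≤ x) (hy : 1/2 ≤ y) (hz : 1/4 ≤ z)
    (hM : 0 < M) (hsum : 3*M ≤ x + y + z) :
    1/(x*y*Real.sqrt z) ≤ 1/Real.sqrt M * (1/(x*y)) + 1/M * (1/(y*Real.sqrt z))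
      + 1/M * (1/(x*Real.sqrt z)) := by
  have hx0 : 0 < x := by linarith
  have hy0 : 0 < y := by linarith
  have hz0 : 0 < z := by linarith
  have hsz : 0 < Real.sqrt z := Real.sqrt_pos.2 hz0
  have hsM : 0 < Real.sqrt M := Real.sqrt_pos.2 hM
  have hcase : M ≤ x ∨ M ≤ y ∨ M ≤ z := by by_contra h; push_neg at h; linarith [h.1, h.2.1, h.2.2]
  have t1 : 0 ≤ 1/Real.sqrt M * (1/(x*y)) := by positivity
  have t2 : 0 ≤ 1/M * (1/(y*Real.sqrt z)) := by positivity
  have t3 : 0 ≤ 1/M * (1/(x*Real.sqrt z)) := by positivity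
  rcases hcase with h | h | h
  · have key : 1/(x*y*Real.sqrt z) ≤ 1/M * (1/(y*Real.sqrt z)) := by
      rw [div_mul_div_comm, one_mul]
      apply one_div_le_one_div_of_le (by positivity)
      calc M * (y*Real.sqrt z) ≤ x * (y*Real.sqrt z) := by
            apply mul_le_mul_of_nonneg_right h (by positivity)
        _ = x*y*Real.sqrt z := by ring
    linarith
  · have key : 1/(x*y*Real.sqrt z) ≤ 1/M * (1/(x*Real.sqrt z)) := by
      rw [div_mul_div_comm, one_mul]
      apply one_div_le_one_div_of_le (by positivity)
      calc M * (x*Real.sqrt z) ≤ y * (x*Real.sqrt z) := by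
            apply mul_le_mul_of_nonneg_right h (by positivity)
        _ = x*y*Real.sqrt z := by ring
    linarith
  · have hs : Real.sqrt M ≤ Real.sqrt z := Real.sqrt_le_sqrt h
    have key : 1/(x*y*Real.sqrt z) ≤ 1/Real.sqrt M * (1/(x*y)) := by
      rw [div_mul_div_comm, one_mul]
      apply one_div_le_one_div_of_le (by positivity)
      calc Real.sqrt M * (x*y) ≤ Real.sqrt z * (x*y) := by
            apply mul_le_mul_of_nonneg_right hs (by positivity)
        _ = x*y*Real.sqrt z := by ring
    linarith

lemma sumA (n : ℕ) :
    ∑ p ∈ sset n, 1/(((p.1:ℝ)-1/2)*((p.2:ℝ)-1/2)) ≤ S1 n * S1 n := by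
  calc ∑ p ∈ sset n, 1/(((p.1:ℝ)-1/2)*((p.2:ℝ)-1/2))
      ≤ ∑ p ∈ Finset.Icc 1 n ×ˢ Finset.Icc 1 n, 1/(((p.1:ℝ)-1/2)*((p.2:ℝ)-1/2)) := by
        apply Finset.sum_le_sum_of_subset_of_nonneg (Finset.filter_subset _ _)
        intro p hp _
        rw [Finset.mem_product, Finset.mem_Icc, Finset.mem_Icc] at hp
        have h1 : (1:ℝ) ≤ p.1 := by exact_mod_cast hp.1.1
        have h2 : (1:ℝ) ≤ p.2 := by exact_mod_cast hp.2.1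
        have : (0:ℝ) < (p.1:ℝ) - 1/2 := by linarith
        have : (0:ℝ) < (p.2:ℝ) - 1/2 := by linarith
        positivity
    _ = S1 n * S1 n := by
        rw [S1, Finset.sum_mul_sum, Finset.sum_product]
        apply Finset.sum_congr rfl; intro a _
        apply Finset.sum_congr rfl; intro b _
        rw [one_div_mul_one_div]

lemma sumB (n : ℕ) :
    ∑ p ∈ sset n, 1/(((p.2:ℝ)-1/2) * Real.sqrt ((n:ℝ)-(p.1:ℝ)-(p.2:ℝ)+1/4)) ≤ S1 n * S2 n := by
  have hrw : ∀ p ∈ sset n, 1/(((p.2:ℝ)-1/2) * Real.sqrt ((n:ℝ)-(p.1:ℝ)-(p.2:ℝ)+1/4)) =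
      (fun q : ℕ × ℕ => 1/(((q.1:ℝ)-1/2) * Real.sqrt ((q.2:ℝ)+1/4)))
        ((p.2, n - p.1 - p.2) : ℕ × ℕ) := by
    intro p hp
    simp only [sset, Finset.mem_filter, Finset.mem_product, Finset.mem_Icc] at hp
    have hc : ((n - p.1 - p.2 : ℕ) : ℝ) = (n:ℝ) - (p.1:ℝ) - (p.2:ℝ) := by
      have hle := hp.2
      have h' : n - p.1 - p.2 = n - (p.1 + p.2) := by omega
      rw [h', Nat.cast_sub hle]
      push_cast
      ring
    simp [hc]
  rw [Finset.sum_congr rfl hrw]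
  have hinj : ∀ p ∈ sset n, ∀ q ∈ sset n,
      (fun p : ℕ × ℕ => ((p.2, n - p.1 - p.2) : ℕ × ℕ)) p
        = (fun p : ℕ × ℕ => ((p.2, n - p.1 - p.2) : ℕ × ℕ)) q → p = q := by
    intro p hp q hq heq
    simp only [sset, Finset.mem_filter, Finset.mem_product, Finset.mem_Icc] at hp hq
    simp only [Prod.mk.injEq] at heq
    obtain ⟨h1, h2⟩ := heq
    ext <;> omega
  have himg := Finset.sum_image
    (f := fun q : ℕ × ℕ => 1/(((q.1:ℝ)-1/2) * Real.sqrt ((q.2:ℝ)+1/4))) hinj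
  rw [← himg]
  have hsub : (sset n).image (fun p : ℕ × ℕ => ((p.2, n - p.1 - p.2) : ℕ × ℕ))
      ⊆ Finset.Icc 1 n ×ˢ Finset.range (n+1) := by
    intro q hq
    simp only [Finset.mem_image, sset, Finset.mem_filter, Finset.mem_product,
      Finset.mem_Icc] at hq
    obtain ⟨p, hp, rfl⟩ := hq
    simp only [Finset.mem_product, Finset.mem_Icc, Finset.mem_range]
    omega
  have hnn : ∀ q ∈ Finset.Icc 1 n ×ˢ Finset.range (n+1),
      q ∉ (sset n).image (fun p : ℕ × ℕ => ((p.2, n - p.1 - p.2) : ℕ × ℕ)) →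
      (0:ℝ) ≤ 1/(((q.1:ℝ)-1/2) * Real.sqrt ((q.2:ℝ)+1/4)) := by
    intro q hq _
    simp only [Finset.mem_product, Finset.mem_Icc, Finset.mem_range] at hq
    have h1 : (1:ℝ) ≤ q.1 := by exact_mod_cast hq.1.1
    have : (0:ℝ) < (q.1:ℝ) - 1/2 := by linarith
    positivity
  apply le_trans (Finset.sum_le_sum_of_subset_of_nonneg hsub hnn)
  apply le_of_eq
  rw [S1, S2, Finset.sum_mul_sum, Finset.sum_product]
  apply Finset.sum_congr rfl; intro a _
  apply Finset.sum_congr rfl; intro b _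
  rw [one_div_mul_one_div]

lemma sumC (n : ℕ) :
    ∑ p ∈ sset n, 1/(((p.1:ℝ)-1/2) * Real.sqrt ((n:ℝ)-(p.1:ℝ)-(p.2:ℝ)+1/4)) ≤ S1 n * S2 n := by
  have hrw : ∀ p ∈ sset n, 1/(((p.1:ℝ)-1/2) * Real.sqrt ((n:ℝ)-(p.1:ℝ)-(p.2:ℝ)+1/4)) =
      (fun q : ℕ × ℕ => 1/(((q.1:ℝ)-1/2) * Real.sqrt ((q.2:ℝ)+1/4)))
        ((p.1, n - p.1 - p.2) : ℕ × ℕ) := by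
    intro p hp
    simp only [sset, Finset.mem_filter, Finset.mem_product, Finset.mem_Icc] at hp
    have hc : ((n - p.1 - p.2 : ℕ) : ℝ) = (n:ℝ) - (p.1:ℝ) - (p.2:ℝ) := by
      have hle := hp.2
      have h' : n - p.1 - p.2 = n - (p.1 + p.2) := by omega
      rw [h', Nat.cast_sub hle]
      push_cast
      ring
    simp [hc]
  rw [Finset.sum_congr rfl hrw]
  have hinj : ∀ p ∈ sset n, ∀ q ∈ sset n,
      (fun p : ℕ × ℕ => ((p.1, n - p.1 - p.2) : ℕ × ℕ)) p
        = (fun p : ℕ × ℕ => ((p.1, n - p.1 - p.2) : ℕ × ℕ)) q → p = q := by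
    intro p hp q hq heq
    simp only [sset, Finset.mem_filter, Finset.mem_product, Finset.mem_Icc] at hp hq
    simp only [Prod.mk.injEq] at heq
    obtain ⟨h1, h2⟩ := heq
    ext <;> omega
  have himg := Finset.sum_image
    (f := fun q : ℕ × ℕ => 1/(((q.1:ℝ)-1/2) * Real.sqrt ((q.2:ℝ)+1/4))) hinj
  rw [← himg]
  have hsub : (sset n).image (fun p : ℕ × ℕ => ((p.1, n - p.1 - p.2) : ℕ × ℕ))
      ⊆ Finset.Icc 1 n ×ˢ Finset.range (n+1) := by
    intro q hq
    simp only [Finset.mem_image, sset, Finset.mem_filter, Finset.mem_product,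
      Finset.mem_Icc] at hq
    obtain ⟨p, hp, rfl⟩ := hq
    simp only [Finset.mem_product, Finset.mem_Icc, Finset.mem_range]
    omega
  have hnn : ∀ q ∈ Finset.Icc 1 n ×ˢ Finset.range (n+1),
      q ∉ (sset n).image (fun p : ℕ × ℕ => ((p.1, n - p.1 - p.2) : ℕ × ℕ)) →
      (0:ℝ) ≤ 1/(((q.1:ℝ)-1/2) * Real.sqrt ((q.2:ℝ)+1/4)) := by
    intro q hq _
    simp only [Finset.mem_product, Finset.mem_Icc, Finset.mem_range] at hq
    have h1 : (1:ℝ) ≤ q.1 := by exact_mod_cast hq.1.1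
    have : (0:ℝ) < (q.1:ℝ) - 1/2 := by linarith
    positivity
  apply le_trans (Finset.sum_le_sum_of_subset_of_nonneg hsub hnn)
  apply le_of_eq
  rw [S1, S2, Finset.sum_mul_sum, Finset.sum_product]
  apply Finset.sum_congr rfl; intro a _
  apply Finset.sum_congr rfl; intro b _
  rw [one_div_mul_one_div]

/-- `T n = O((log n)² / √n)` as `n → ∞`: there are a constant `C > 0` and a
threshold `N` such that `T n ≤ C (log n)² / √n` for all `n ≥ N`. -/
theorem stmt19 :
    ∃ C : ℝ, 0 < C ∧ ∃ N : ℕ, ∀ n : ℕ, N ≤ n →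
      Tsum n ≤ C * (Real.log (n : ℝ)) ^ 2 / Real.sqrt (n : ℝ) := by
  refine ⟨336, by norm_num, 3, fun n hn => ?_⟩
  have hn3 : (3:ℝ) ≤ (n:ℝ) := by exact_mod_cast hn
  set M : ℝ := ((n:ℝ) - 3/4)/3 with hMdef
  have hM : 0 < M := by rw [hMdef]; linarith
  have hsM : 0 < Real.sqrt M := Real.sqrt_pos.2 hM
  have hsn : 0 < Real.sqrt (n:ℝ) := Real.sqrt_pos.2 (by linarith)
  -- pointwise bound
  have hpt : ∀ p ∈ sset n,
      1 / (((p.1:ℝ) - 1/2) * ((p.2:ℝ) - 1/2) *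
        Real.sqrt ((n:ℝ) - (p.1:ℝ) - (p.2:ℝ) + 1/4)) ≤
      1/Real.sqrt M * (1/(((p.1:ℝ)-1/2)*((p.2:ℝ)-1/2)))
      + 1/M * (1/(((p.2:ℝ)-1/2)*Real.sqrt ((n:ℝ)-(p.1:ℝ)-(p.2:ℝ)+1/4)))
      + 1/M * (1/(((p.1:ℝ)-1/2)*Real.sqrt ((n:ℝ)-(p.1:ℝ)-(p.2:ℝ)+1/4))) := by
    intro p hp
    simp only [sset, Finset.mem_filter, Finset.mem_product, Finset.mem_Icc] at hp
    have h1 : (1:ℝ) ≤ p.1 := by exact_mod_cast hp.1.1.1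
    have h2 : (1:ℝ) ≤ p.2 := by exact_mod_cast hp.1.2.1
    have h3 : (p.1:ℝ) + (p.2:ℝ) ≤ (n:ℝ) := by exact_mod_cast hp.2
    exact term_bound ((p.1:ℝ) - 1/2) ((p.2:ℝ) - 1/2) ((n:ℝ)-(p.1:ℝ)-(p.2:ℝ)+1/4) M
      (by linarith) (by linarith) (by linarith) hM (by rw [hMdef]; ring_nf; linarith)
  -- sum bound
  have hTs : Tsum n ≤ (1/Real.sqrt M) * (S1 n * S1 n)
      + (1/M) * (S1 n * S2 n) + (1/M) * (S1 n * S2 n) := by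
    calc Tsum n ≤ ∑ p ∈ sset n,
        (1/Real.sqrt M * (1/(((p.1:ℝ)-1/2)*((p.2:ℝ)-1/2)))
          + 1/M * (1/(((p.2:ℝ)-1/2)*Real.sqrt ((n:ℝ)-(p.1:ℝ)-(p.2:ℝ)+1/4)))
          + 1/M * (1/(((p.1:ℝ)-1/2)*Real.sqrt ((n:ℝ)-(p.1:ℝ)-(p.2:ℝ)+1/4)))) :=
        Finset.sum_le_sum hpt
      _ = (1/Real.sqrt M) * ∑ p ∈ sset n, 1/(((p.1:ℝ)-1/2)*((p.2:ℝ)-1/2))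
          + (1/M) * ∑ p ∈ sset n, 1/(((p.2:ℝ)-1/2)*Real.sqrt ((n:ℝ)-(p.1:ℝ)-(p.2:ℝ)+1/4))
          + (1/M) * ∑ p ∈ sset n, 1/(((p.1:ℝ)-1/2)*Real.sqrt ((n:ℝ)-(p.1:ℝ)-(p.2:ℝ)+1/4)) := by
        rw [Finset.sum_add_distrib, Finset.sum_add_distrib,
          Finset.mul_sum, Finset.mul_sum, Finset.mul_sum]
      _ ≤ (1/Real.sqrt M) * (S1 n * S1 n) + (1/M) * (S1 n * S2 n) + (1/M) * (S1 n * S2 n) := by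
        gcongr <;>
          first
            | positivity
            | exact sumA n
            | exact sumB n
            | exact sumC n
  -- numeric bounds
  have hL : 1 ≤ Real.log n := by
    rw [Real.le_log_iff_exp_le (by linarith)]
    calc Real.exp 1 ≤ 2.7182818286 := le_of_lt Real.exp_one_lt_d9
      _ ≤ 3 := by norm_num
      _ ≤ (n:ℝ) := hn3
  have hS1 : S1 n ≤ 4 * Real.log n := by
    have := S1_bound n (by omega)
    linarith
  have hS2 : S2 n ≤ 6 * Real.sqrt n := by
    have hb := S2_bound n
    have h2 : Real.sqrt ((n:ℝ)+1) ≤ Real.sqrt 2 * Real.sqrt n := by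
      rw [← Real.sqrt_mul (by norm_num)]
      exact Real.sqrt_le_sqrt (by linarith)
    have h3 : Real.sqrt 2 ≤ 1.5 := by
      rw [show (1.5:ℝ) = Real.sqrt (1.5^2) from (Real.sqrt_sq (by norm_num)).symm]
      exact Real.sqrt_le_sqrt (by norm_num)
    nlinarith [Real.sqrt_nonneg (n:ℝ)]
  have hMn1 : 1/Real.sqrt M ≤ 3/Real.sqrt n := by
    have h9 : Real.sqrt (n:ℝ) ≤ 3 * Real.sqrt M := by
      have h3 : (3:ℝ) = Real.sqrt 9 := by
        rw [show (9:ℝ) = 3^2 by norm_num, Real.sqrt_sq (by norm_num)]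
      rw [h3, ← Real.sqrt_mul (by norm_num)]
      exact Real.sqrt_le_sqrt (by rw [hMdef]; linarith)
    rw [div_le_div_iff₀ hsM hsn]
    nlinarith
  have hMn2 : 1/M ≤ 6/(n:ℝ) := by
    rw [div_le_div_iff₀ hM (by linarith)]
    rw [hMdef]; linarith
  have hS1nn := S1_nonneg n
  have hS2nn := S2_nonneg n
  have hLnn : (0:ℝ) ≤ Real.log n := by linarith
  have hfinal : Tsum n ≤ (3/Real.sqrt n) * ((4*Real.log n) * (4*Real.log n))
      + (6/(n:ℝ)) * ((4*Real.log n)*(6*Real.sqrt n))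
      + (6/(n:ℝ)) * ((4*Real.log n)*(6*Real.sqrt n)) := by
    apply le_trans hTs
    gcongr <;> first | positivity | assumption
  apply le_trans hfinal
  have hnn : Real.sqrt (n:ℝ) * Real.sqrt (n:ℝ) = (n:ℝ) := Real.mul_self_sqrt (by linarith)
  set t := Real.sqrt (n:ℝ) with ht
  set L := Real.log n with hLdef
  have ht0 : 0 < t := hsn
  have e1 : 6/(n:ℝ)*(4*L*(6*t)) = 144*L/t := by
    rw [← hnn]; field_simp; ring
  have e2 : 3/t*(4*L*(4*L)) = 48*L*L/t := by ring
  rw [e1, e2]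
  have e3 : 48*L*L/t + 144*L/t + 144*L/t = (48*L*L + 288*L)/t := by ring
  rw [e3, pow_two, show (336:ℝ)*(L*L)/t = (336*(L*L))/t from rfl]
  apply div_le_div_of_nonneg_right ?_ (le_of_lt ht0)
  nlinarith
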